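/- arXiv:1306.4029 — 7 statements merged into one kernel-verified Lean document; each statement's English description precedes it below -/
import Mathlib

section
/- Let k ≥ 1 and let F be a k-CNF formula over n Boolean variables. Then the number of satisfying assignments of F that are isolated (i.e., isolated in all n directions) is at most 2^(n − n/k). -/
set_option maxHeartbeats 1000000

open Classical


/-- An assignment `α` satisfies a CNF formula `F` (a finite set of clauses, each clause a
finite set of literals, a literal being a pair of a variable index and a sign) if every
clause contains a literal made true by `α`. -/
def Satisfies {n : ℕ} (F : Finset (Finset (Fin n × Bool))) (α : Fin n → Bool) : Prop :=
  ∀ C ∈ F, ∃ l ∈ C, α l.1 = l.2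

/-- The assignment obtained from `α` by flipping coordinate `i`. -/
def flipAt {n : ℕ} (α : Fin n → Bool) (i : Fin n) : Fin n → Bool :=
  Function.update α i (!α i)


namespace PPZ

variable {n : ℕ} (F : Finset (Finset (Fin n × Bool)))

def CritProp (α : Fin n → Bool) (i : Fin n) (C : Finset (Fin n × Bool)) : Prop :=
  C ∈ F ∧ (i, α i) ∈ C ∧ ∀ l ∈ C, l ≠ (i, α i) → l.1 ≠ i ∧ α l.1 ≠ l.2

lemma crit_exists {α : Fin n → Bool} {i : Fin n} (hs : Satisfies F α)
    (hns : ¬ Satisfies F (flipAt α i)) : ∃ C, CritProp F α i C := by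
  simp only [Satisfies, not_forall] at hns
  obtain ⟨C, hCF, hCflip⟩ := hns
  push_neg at hCflip
  obtain ⟨l₀, hl₀C, hl₀⟩ := hs C hCF
  have hl₀i : l₀.1 = i := by
    by_contra h
    exact hCflip l₀ hl₀C (by simpa [flipAt, Function.update_of_ne h] using hl₀)
  have hl₀eq : l₀ = (i, α i) := by
    obtain ⟨a, b⟩ := l₀; simp_all
  refine ⟨C, hCF, hl₀eq ▸ hl₀C, ?_⟩
  intro l hlC hlne
  have hflip := hCflip l hlC
  have h1 : l.1 ≠ i := by
    intro h
    rw [h, flipAt, Function.update_self] at hflip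
    have : l.2 = α i := by
      cases hb : α i <;> cases hb2 : l.2 <;> simp_all
    exact hlne (by obtain ⟨a, b⟩ := l; simp_all)
  rw [flipAt, Function.update_of_ne h1] at hflip
  exact ⟨h1, hflip⟩

noncomputable def crit (α : Fin n → Bool) (i : Fin n) : Finset (Fin n × Bool) :=
  if h : ∃ C, CritProp F α i C then h.choose else ∅

lemma crit_spec {α : Fin n → Bool} {i : Fin n} (hs : Satisfies F α)
    (hns : ¬ Satisfies F (flipAt α i)) : CritProp F α i (crit F α i) := by
  have h := crit_exists F hs hns
  rw [crit, dif_pos h]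
  exact h.choose_spec

noncomputable def forcedSet (π : Equiv.Perm (Fin n)) (α : Fin n → Bool) : Finset (Fin n) :=
  Finset.univ.filter fun i => ∀ l ∈ crit F α i, l.1 ≠ i → π l.1 < π i

noncomputable def decode (π : Equiv.Perm (Fin n)) (s : Fin n → Bool) (v : Fin n) : Bool :=
  if h : ∃ b : Bool, ∃ C ∈ F, (v, b) ∈ C ∧ ∀ l ∈ C, l ≠ (v, b) →
      ∃ j : {j : Fin n // π j < π v}, j.1 = l.1 ∧ decode π s j.1 ≠ l.2
  then h.choose else s v
termination_by (π v : ℕ)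
decreasing_by all_goals first | exact j.2 | exact a.2


lemma decode_eq (π : Equiv.Perm (Fin n)) {α : Fin n → Bool} (hsat : Satisfies F α)
    (hiso : ∀ i, ¬ Satisfies F (flipAt α i))
    (s : Fin n → Bool) (hs : ∀ v, v ∉ forcedSet F π α → s v = α v) :
    ∀ v, decode F π s v = α v := by
  suffices H : ∀ m : ℕ, ∀ v, (π v : ℕ) = m → decode F π s v = α v by
    intro v; exact H (π v) v rfl
  intro m
  induction m using Nat.strong_induction_on with
  | _ m IH =>
    intro v hv
    rw [decode]
    by_cases h : ∃ b : Bool, ∃ C ∈ F, (v, b) ∈ C ∧ ∀ l ∈ C, l ≠ (v, b) →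
        ∃ j : {j : Fin n // π j < π v}, j.1 = l.1 ∧ decode F π s j.1 ≠ l.2
    · rw [dif_pos h]
      obtain ⟨C, hCF, hvb, hall⟩ := h.choose_spec
      obtain ⟨l₀, hl₀C, hl₀⟩ := hsat C hCF
      by_cases hne : l₀ = (v, h.choose)
      · rw [hne] at hl₀; exact hl₀.symm
      · obtain ⟨j, hj1, hjne⟩ := hall l₀ hl₀C hne
        have hlt : (π j.1 : ℕ) < m := hv ▸ j.2
        have := IH (π j.1) hlt j.1 rfl
        rw [this, hj1] at hjne
        exact absurd hl₀ hjne
    · rw [dif_neg h]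
      have hv' : v ∉ forcedSet F π α := by
        intro hvf
        simp only [forcedSet, Finset.mem_filter, Finset.mem_univ, true_and] at hvf
        obtain ⟨hcF, hcmem, hcrit⟩ := crit_spec F hsat (hiso v)
        refine h ⟨α v, crit F α v, hcF, hcmem, ?_⟩
        intro l hlC hlne
        obtain ⟨h1, h2⟩ := hcrit l hlC hlne
        have hlt : π l.1 < π v := hvf l hlC h1
        refine ⟨⟨l.1, hlt⟩, rfl, ?_⟩
        have := IH (π l.1) (hv ▸ hlt) l.1 rfl
        rw [this]; exact h2
      rw [hs v hv']
noncomputable def A (S : Finset (Fin n)) (j : Fin n) : Finset (Equiv.Perm (Fin n)) :=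
  Finset.univ.filter fun π => ∀ x ∈ S, x ≠ j → π x < π j

lemma mem_A_mul_swap {S : Finset (Fin n)} {a b : Fin n} (ha : a ∈ S) (hb : b ∈ S)
    {π : Equiv.Perm (Fin n)} (hπ : π ∈ A S a) : π * Equiv.swap a b ∈ A S b := by
  by_cases hab : a = b
  · subst hab; simpa [Equiv.Perm.mul_refl] using hπ
  simp only [A, Finset.mem_filter, Finset.mem_univ, true_and] at hπ ⊢
  intro x hxS hxb
  have hswx : Equiv.swap a b x ∈ S ∧ Equiv.swap a b x ≠ a := by
    by_cases hxa : x = a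
    · subst hxa; rw [Equiv.swap_apply_left]; exact ⟨hb, fun h => hab h.symm⟩
    · rw [Equiv.swap_apply_of_ne_of_ne hxa hxb]; exact ⟨hxS, hxa⟩
  have hb' : (π * Equiv.swap a b) b = π a := by
    simp [Equiv.Perm.mul_apply, Equiv.swap_apply_right]
  rw [Equiv.Perm.mul_apply, hb']
  exact hπ _ hswx.1 hswx.2

lemma card_A_eq {S : Finset (Fin n)} {a b : Fin n} (ha : a ∈ S) (hb : b ∈ S) :
    (A S a).card = (A S b).card := by
  refine Finset.card_bij' (fun π _ => π * Equiv.swap a b) (fun π _ => π * Equiv.swap a b)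
    (fun π hπ => mem_A_mul_swap ha hb hπ)
    (fun π hπ => by rw [Equiv.swap_comm]; exact mem_A_mul_swap hb ha hπ) ?_ ?_
  · intro π hπ; rw [mul_assoc, Equiv.swap_mul_self, mul_one]
  · intro π hπ; rw [mul_assoc, Equiv.swap_mul_self, mul_one]

lemma factorial_le {S : Finset (Fin n)} {i : Fin n} (hi : i ∈ S) :
    Nat.factorial n ≤ S.card * (A S i).card := by
  have hcover : (Finset.univ : Finset (Equiv.Perm (Fin n))) ⊆ S.biUnion (A S) := by
    intro π _
    obtain ⟨b, hbS, hbmax⟩ := S.exists_max_image π ⟨i, hi⟩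
    refine Finset.mem_biUnion.2 ⟨b, hbS, ?_⟩
    simp only [A, Finset.mem_filter, Finset.mem_univ, true_and]
    intro x hxS hxb
    exact lt_of_le_of_ne (hbmax x hxS) (fun h => hxb (π.injective h))
  calc Nat.factorial n = (Finset.univ : Finset (Equiv.Perm (Fin n))).card := by
        rw [Finset.card_univ, Fintype.card_perm, Fintype.card_fin]
    _ ≤ (S.biUnion (A S)).card := Finset.card_le_card hcover
    _ ≤ ∑ j ∈ S, (A S j).card := Finset.card_biUnion_le
    _ = ∑ _j ∈ S, (A S i).card := Finset.sum_congr rfl fun j hj => card_A_eq hj hi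
    _ = S.card * (A S i).card := by rw [Finset.sum_const, smul_eq_mul]

end PPZ

namespace PPZ
variable {n : ℕ} (F : Finset (Finset (Fin n × Bool)))

noncomputable def Iso : Finset (Fin n → Bool) :=
  Finset.univ.filter fun α => Satisfies F α ∧ ∀ i : Fin n, ¬ Satisfies F (flipAt α i)

noncomputable def T (π : Equiv.Perm (Fin n)) (α : Fin n → Bool) : Finset (Fin n → Bool) :=
  Finset.univ.filter fun s => ∀ v, v ∉ forcedSet F π α → s v = α v

lemma card_T (π : Equiv.Perm (Fin n)) (α : Fin n → Bool) :
    (T F π α).card = 2 ^ (forcedSet F π α).card := by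
  classical
  have : (T F π α).card = (Finset.univ : Finset (↥(forcedSet F π α) → Bool)).card := by
    refine Finset.card_bij' (fun s _ => fun v => s v.1)
      (fun w _ => fun v => if h : v ∈ forcedSet F π α then w ⟨v, h⟩ else α v)
      (fun s hs => Finset.mem_univ _) ?_ ?_ ?_
    · intro w hw
      simp only [T, Finset.mem_filter, Finset.mem_univ, true_and]
      intro v hv
      rw [dif_neg hv]
    · intro s hs
      funext v
      dsimp only
      by_cases h : v ∈ forcedSet F π α
      · rw [dif_pos h]
      · rw [dif_neg h]
        simp only [T, Finset.mem_filter, Finset.mem_univ, true_and] at hs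
        exact (hs v h).symm
    · intro w hw
      funext v
      dsimp only
      rw [dif_pos v.2]
  rw [this, Finset.card_univ]
  simp [Fintype.card_coe]

lemma disjoint_T (π : Equiv.Perm (Fin n)) {α β : Fin n → Bool}
    (hα : α ∈ Iso F) (hβ : β ∈ Iso F) (hne : α ≠ β) :
    Disjoint (T F π α) (T F π β) := by
  rw [Finset.disjoint_left]
  intro s hsα hsβ
  simp only [Iso, Finset.mem_filter, Finset.mem_univ, true_and] at hα hβ
  simp only [T, Finset.mem_filter, Finset.mem_univ, true_and] at hsα hsβ
  have h1 := decode_eq F π hα.1 hα.2 s hsα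
  have h2 := decode_eq F π hβ.1 hβ.2 s hsβ
  exact hne (funext fun v => (h1 v).symm.trans (h2 v))

lemma count_le (π : Equiv.Perm (Fin n)) :
    ∑ α ∈ Iso F, 2 ^ (forcedSet F π α).card ≤ 2 ^ n := by
  classical
  calc ∑ α ∈ Iso F, 2 ^ (forcedSet F π α).card
      = ∑ α ∈ Iso F, (T F π α).card := by
        exact Finset.sum_congr rfl fun α _ => (card_T F π α).symm
    _ = ((Iso F).biUnion (T F π)).card := by
        exact (Finset.card_biUnion fun α hα β hβ hne => disjoint_T F π hα hβ hne).symm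
    _ ≤ Fintype.card (Fin n → Bool) := Finset.card_le_univ _
    _ = 2 ^ n := by simp

end PPZ

namespace PPZ
variable {n : ℕ} (F : Finset (Finset (Fin n × Bool)))

lemma forced_count {k : ℕ} (hkcnf : ∀ C ∈ F, C.card ≤ k) {α : Fin n → Bool}
    (hα : α ∈ Iso F) (i : Fin n) :
    Nat.factorial n ≤
      k * (Finset.univ.filter fun π : Equiv.Perm (Fin n) => i ∈ forcedSet F π α).card := by
  simp only [Iso, Finset.mem_filter, Finset.mem_univ, true_and] at hα
  obtain ⟨hcF, hcmem, hcrit⟩ := crit_spec F hα.1 (hα.2 i)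
  set S : Finset (Fin n) := (crit F α i).image Prod.fst with hS
  have hiS : i ∈ S := Finset.mem_image.2 ⟨(i, α i), hcmem, rfl⟩
  have hfeq : (Finset.univ.filter fun π : Equiv.Perm (Fin n) => i ∈ forcedSet F π α) = A S i := by
    apply Finset.filter_congr
    intro π _
    simp only [forcedSet, A, Finset.mem_filter, Finset.mem_univ, true_and]
    constructor
    · intro h x hxS hxi
      obtain ⟨l, hl, rfl⟩ := Finset.mem_image.1 hxS
      exact h l hl hxi
    · intro h l hl hli
      exact h l.1 (Finset.mem_image.2 ⟨l, hl, rfl⟩) hli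
  rw [hfeq]
  have hcard : S.card ≤ k := le_trans (Finset.card_image_le) (hkcnf _ hcF)
  exact le_trans (factorial_le hiS) (Nat.mul_le_mul_right _ hcard)

lemma sum_forced {k : ℕ} (hkcnf : ∀ C ∈ F, C.card ≤ k) {α : Fin n → Bool}
    (hα : α ∈ Iso F) :
    n * Nat.factorial n ≤ k * ∑ π : Equiv.Perm (Fin n), (forcedSet F π α).card := by
  have hswap : ∑ π : Equiv.Perm (Fin n), (forcedSet F π α).card
      = ∑ i : Fin n, (Finset.univ.filter fun π : Equiv.Perm (Fin n) => i ∈ forcedSet F π α).card := by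
    simp only [Finset.card_filter]
    rw [Finset.sum_comm]
    apply Finset.sum_congr rfl
    intro π _
    simp only [forcedSet, Finset.card_filter, Finset.mem_filter, Finset.mem_univ, true_and]
  rw [hswap, Finset.mul_sum]
  calc n * Nat.factorial n = ∑ _i : Fin n, Nat.factorial n := by
        rw [Finset.sum_const, Finset.card_univ, Fintype.card_fin, smul_eq_mul]
    _ ≤ _ := Finset.sum_le_sum fun i _ => forced_count F hkcnf hα i

lemma amgm {k : ℕ} (hk : 1 ≤ k) (hkcnf : ∀ C ∈ F, C.card ≤ k) {α : Fin n → Bool}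
    (hα : α ∈ Iso F) :
    (Nat.factorial n : ℝ) * (2 : ℝ) ^ ((n : ℝ) / (k : ℝ)) ≤
      ∑ π : Equiv.Perm (Fin n), (2 : ℝ) ^ (((forcedSet F π α).card : ℕ) : ℝ) := by
  set M : ℝ := (Nat.factorial n : ℝ) with hM
  have hM0 : (0 : ℝ) < M := by positivity
  have hk0 : (0 : ℝ) < (k : ℝ) := by exact_mod_cast hk
  set X : Equiv.Perm (Fin n) → ℝ := fun π => ((forcedSet F π α).card : ℝ) with hX
  have hcardPerm : ((Finset.univ : Finset (Equiv.Perm (Fin n))).card : ℝ) = M := by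
    rw [Finset.card_univ, Fintype.card_perm, Fintype.card_fin]
  have hgm := Real.geom_mean_le_arith_mean_weighted Finset.univ (fun _ => 1 / M)
    (fun π => (2 : ℝ) ^ (X π))
    (fun _ _ => by positivity)
    (by rw [Finset.sum_const, nsmul_eq_mul, hcardPerm]; field_simp)
    (fun π _ => by positivity)
  have hsumX : (n : ℝ) / (k : ℝ) ≤ (∑ π : Equiv.Perm (Fin n), X π) / M := by
    rw [div_le_div_iff₀ hk0 hM0]
    have := sum_forced F hkcnf hα
    have hcast : (n : ℝ) * M ≤ (k : ℝ) * ∑ π : Equiv.Perm (Fin n), X π := by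
      have := (Nat.cast_le (α := ℝ)).2 this
      push_cast at this ⊢
      convert this using 2 <;> norm_num
    linarith
  have hlhs : (2 : ℝ) ^ ((n : ℝ) / (k : ℝ)) ≤
      ∏ π : Equiv.Perm (Fin n), ((2 : ℝ) ^ (X π)) ^ (1 / M) := by
    have h1 : ∀ π : Equiv.Perm (Fin n), ((2 : ℝ) ^ (X π)) ^ (1 / M) = (2 : ℝ) ^ (X π * (1 / M)) :=
      fun π => (Real.rpow_mul (by norm_num) _ _).symm
    calc (2 : ℝ) ^ ((n : ℝ) / (k : ℝ)) ≤ (2 : ℝ) ^ ((∑ π : Equiv.Perm (Fin n), X π) / M) :=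
          Real.rpow_le_rpow_left_iff (by norm_num) |>.2 hsumX
      _ = ∏ π : Equiv.Perm (Fin n), ((2 : ℝ) ^ (X π)) ^ (1 / M) := by
          simp only [h1]
          rw [← Real.rpow_sum_of_pos (by norm_num : (0:ℝ) < 2)]
          congr 1
          simp only [Finset.sum_div, mul_one_div]
  have hfinal := le_trans hlhs hgm
  have : ∑ π : Equiv.Perm (Fin n), 1 / M * (2 : ℝ) ^ (X π)
      = (1 / M) * ∑ π : Equiv.Perm (Fin n), (2 : ℝ) ^ (X π) := by
    rw [Finset.mul_sum]
  rw [this] at hfinal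
  calc M * (2 : ℝ) ^ ((n : ℝ) / (k : ℝ))
      ≤ M * ((1 / M) * ∑ π : Equiv.Perm (Fin n), (2 : ℝ) ^ (X π)) := by
        exact mul_le_mul_of_nonneg_left hfinal (le_of_lt hM0)
    _ = ∑ π : Equiv.Perm (Fin n), (2 : ℝ) ^ (X π) := by
        field_simp
end PPZ



/-- A `k`-CNF formula (every clause has at most `k` literals) over `n` variables has at most
`2 ^ (n - n/k)` isolated satisfying assignments, i.e. satisfying assignments that are
isolated in all `n` directions. -/
theorem isolated_satisfying_count_le {n k : ℕ} (hk : 1 ≤ k)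
    (F : Finset (Finset (Fin n × Bool))) (hkcnf : ∀ C ∈ F, C.card ≤ k) :
    ((Finset.univ.filter fun α : Fin n → Bool =>
        Satisfies F α ∧ ∀ i : Fin n, ¬ Satisfies F (flipAt α i)).card : ℝ)
      ≤ (2 : ℝ) ^ ((n : ℝ) - (n : ℝ) / (k : ℝ)) := by
  classical
  have hIso : (Finset.univ.filter fun α : Fin n → Bool =>
      Satisfies F α ∧ ∀ i : Fin n, ¬ Satisfies F (flipAt α i)) = PPZ.Iso F := rfl
  rw [hIso]
  set M : ℝ := (Nat.factorial n : ℝ) with hM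
  have hM0 : (0 : ℝ) < M := by positivity
  have h2 : (0 : ℝ) < (2 : ℝ) ^ ((n : ℝ) / (k : ℝ)) := Real.rpow_pos_of_pos (by norm_num) _
  have hcardPerm : ((Finset.univ : Finset (Equiv.Perm (Fin n))).card : ℝ) = M := by
    rw [Finset.card_univ, Fintype.card_perm, Fintype.card_fin]
  have key : ((PPZ.Iso F).card : ℝ) * (M * (2 : ℝ) ^ ((n : ℝ) / (k : ℝ)))
      ≤ M * (2 : ℝ) ^ ((n : ℝ)) := by
    calc ((PPZ.Iso F).card : ℝ) * (M * (2 : ℝ) ^ ((n : ℝ) / (k : ℝ)))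
        = ∑ _α ∈ PPZ.Iso F, (M * (2 : ℝ) ^ ((n : ℝ) / (k : ℝ))) := by
          rw [Finset.sum_const, nsmul_eq_mul]
      _ ≤ ∑ α ∈ PPZ.Iso F, ∑ π : Equiv.Perm (Fin n),
            (2 : ℝ) ^ (((PPZ.forcedSet F π α).card : ℕ) : ℝ) :=
          Finset.sum_le_sum fun α hα => PPZ.amgm F hk hkcnf hα
      _ = ∑ π : Equiv.Perm (Fin n), ∑ α ∈ PPZ.Iso F,
            (2 : ℝ) ^ (((PPZ.forcedSet F π α).card : ℕ) : ℝ) := Finset.sum_comm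
      _ ≤ ∑ _π : Equiv.Perm (Fin n), (2 : ℝ) ^ ((n : ℝ)) := by
          apply Finset.sum_le_sum
          intro π _
          have hnat := PPZ.count_le F π
          calc ∑ α ∈ PPZ.Iso F, (2 : ℝ) ^ (((PPZ.forcedSet F π α).card : ℕ) : ℝ)
              = ((∑ α ∈ PPZ.Iso F, 2 ^ (PPZ.forcedSet F π α).card : ℕ) : ℝ) := by
                push_cast [Real.rpow_natCast]
                rfl
            _ ≤ ((2 ^ n : ℕ) : ℝ) := by exact_mod_cast hnat
            _ = (2 : ℝ) ^ ((n : ℝ)) := by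
                rw [Real.rpow_natCast]; push_cast; rfl
      _ = M * (2 : ℝ) ^ ((n : ℝ)) := by
          rw [Finset.sum_const, nsmul_eq_mul, hcardPerm]
  have hdiv : ((PPZ.Iso F).card : ℝ) ≤ (M * (2 : ℝ) ^ ((n : ℝ))) / (M * (2 : ℝ) ^ ((n : ℝ) / (k : ℝ))) := by
    rw [le_div_iff₀ (by positivity)]
    exact key
  calc ((PPZ.Iso F).card : ℝ) ≤ (M * (2 : ℝ) ^ ((n : ℝ))) / (M * (2 : ℝ) ^ ((n : ℝ) / (k : ℝ))) := hdiv
    _ = (2 : ℝ) ^ ((n : ℝ)) / (2 : ℝ) ^ ((n : ℝ) / (k : ℝ)) := by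
        rw [mul_div_mul_left _ _ (ne_of_gt hM0)]
    _ = (2 : ℝ) ^ ((n : ℝ) - (n : ℝ) / (k : ℝ)) := (Real.rpow_sub (by norm_num) _ _).symm
end

section
/- Let F be a satisfiable CNF formula over n Boolean variables, let sat(F) denote its set of satisfying assignments, and for α ∈ sat(F) let j(α) be the number of directions in which α is isolated. Then ∑_{α ∈ sat(F)} 2^(j(α)) ≥ 2^n. -/
open Classical

/-- For a satisfiable CNF formula `F` over `n` variables, summing `2 ^ j(α)` over all
satisfying assignments `α`, where `j(α)` is the number of directions in which `α` is
isolated, gives at least `2 ^ n`. -/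
theorem sum_two_pow_isolation_ge {n : ℕ} (F : Finset (Finset (Fin n × Bool)))
    (hsat : ∃ α : Fin n → Bool, Satisfies F α) :
    2 ^ n ≤ ∑ α ∈ Finset.univ.filter (fun α : Fin n → Bool => Satisfies F α),
      2 ^ (Finset.univ.filter fun i : Fin n => ¬ Satisfies F (flipAt α i)).card := by
  classical
  set S := Finset.univ.filter (fun α : Fin n → Bool => Satisfies F α) with hS
  have hSne : S.Nonempty := by
    obtain ⟨α, hα⟩ := hsat
    exact ⟨α, by simp [hS, hα]⟩
  set d : (Fin n → Bool) → (Fin n → Bool) → ℕ :=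
    fun β α => (Finset.univ.filter (fun i => β i ≠ α i)).card with hd
  have hg : ∀ β : Fin n → Bool, ∃ α ∈ S, ∀ α' ∈ S, d β α ≤ d β α' := fun β =>
    S.exists_min_image (d β) hSne
  choose g hgS hgmin using hg
  -- β agrees with g β on every non-isolated coordinate
  have key : ∀ β : Fin n → Bool, ∀ i : Fin n, Satisfies F (flipAt (g β) i) → β i = g β i := by
    intro β i hiso
    by_contra hne
    have hflipS : flipAt (g β) i ∈ S := by simp [hS, hiso]
    have h1 : (Finset.univ.filter (fun j => β j ≠ flipAt (g β) i j)) =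
        (Finset.univ.filter (fun j => β j ≠ g β j)).erase i := by
      ext j
      simp only [Finset.mem_filter, Finset.mem_erase, Finset.mem_univ, true_and]
      by_cases hj : j = i
      · subst hj
        simp only [flipAt, Function.update_self]
        have hb : β j = !g β j := by
          cases hb' : β j <;> cases hg' : g β j <;> simp_all
        simp [hb]
      · simp [flipAt, Function.update_of_ne hj, hj]
    have h2 : d β (flipAt (g β) i) < d β (g β) := by
      rw [hd]
      simp only
      rw [h1]
      exact Finset.card_erase_lt_of_mem (by simp [hne])
    exact absurd (hgmin β _ hflipS) (not_le.mpr h2)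
  -- fiber of α under g has size at most 2 ^ j(α)
  have fiber_le : ∀ α ∈ S,
      (Finset.univ.filter (fun β : Fin n → Bool => g β = α)).card ≤
        2 ^ (Finset.univ.filter fun i : Fin n => ¬ Satisfies F (flipAt α i)).card := by
    intro α _
    set J := (Finset.univ.filter fun i : Fin n => ¬ Satisfies F (flipAt α i)) with hJ
    have : (Finset.univ.filter (fun β : Fin n → Bool => g β = α)).card ≤
        Fintype.card (↥J → Bool) := by
      apply Finset.card_le_card_of_injOn (fun β (i : ↥J) => β i.1)
        (fun _ _ => Finset.mem_univ _)
      intro β hβ β' hβ' hagree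
      simp only [Finset.mem_coe, Finset.mem_filter, Finset.mem_univ, true_and] at hβ hβ'
      funext i
      by_cases hi : Satisfies F (flipAt α i)
      · have h1 := key β i (by rwa [hβ]); have h2 := key β' i (by rwa [hβ'])
        rw [hβ] at h1; rw [hβ'] at h2; rw [h1, h2]
      · have hiJ : i ∈ J := by simp [hJ, hi]
        exact congrFun hagree ⟨i, hiJ⟩
    calc (Finset.univ.filter (fun β : Fin n → Bool => g β = α)).card
        ≤ Fintype.card (↥J → Bool) := this
      _ = 2 ^ J.card := by simp [Fintype.card_fun]
  have hcard : (Finset.univ : Finset (Fin n → Bool)).card =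
      ∑ α ∈ S, (Finset.univ.filter (fun β : Fin n → Bool => g β = α)).card :=
    Finset.card_eq_sum_card_fiberwise (fun β _ => hgS β)
  have h2n : (2 : ℕ) ^ n = (Finset.univ : Finset (Fin n → Bool)).card := by
    simp [Finset.card_univ]
  rw [h2n, hcard]
  exact Finset.sum_le_sum fiber_le
end

section
/- Let S be a finite nonempty prefix-free set of finite binary strings. Then log₂ |S| is at most the average length (∑_{s ∈ S} |s|) / |S|; equivalently, |S| ≤ 2^((∑_{s ∈ S} |s|) / |S|). -/
lemma kraft_nat (S : Finset (List Bool))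
    (hpf : ∀ s ∈ S, ∀ t ∈ S, s <+: t → s = t) (L : ℕ) (hL : ∀ s ∈ S, s.length ≤ L) :
    ∑ s ∈ S, 2 ^ (L - s.length) ≤ 2 ^ L := by
  classical
  set E : List Bool → Finset (List Bool) :=
    fun s => (Finset.univ : Finset (Fin (L - s.length) → Bool)).image (fun f => s ++ List.ofFn f)
    with hE
  have hcard : ∀ s ∈ S, (E s).card = 2 ^ (L - s.length) := by
    intro s hs
    rw [hE, Finset.card_image_of_injective _ (fun f g h => ?_), Finset.card_univ,
      Fintype.card_fun, Fintype.card_bool, Fintype.card_fin]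
    exact List.ofFn_injective (List.append_cancel_left h)
  have hlen : ∀ s ∈ S, ∀ t ∈ E s, t.length = L := by
    intro s hs t ht
    simp only [hE, Finset.mem_image] at ht
    obtain ⟨f, _, rfl⟩ := ht
    simp [Nat.add_sub_cancel' (hL s hs)]
  have hpre : ∀ s ∈ S, ∀ t ∈ E s, s <+: t := by
    intro s hs t ht
    simp only [hE, Finset.mem_image] at ht
    obtain ⟨f, _, rfl⟩ := ht
    exact List.prefix_append _ _
  have hdisj : (S : Set (List Bool)).PairwiseDisjoint E := by
    intro s hs t ht hne
    refine Finset.disjoint_left.2 fun x hxs hxt => hne ?_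
    rcases List.prefix_or_prefix_of_prefix (hpre s hs x hxs) (hpre t ht x hxt) with h | h
    · exact hpf s hs t ht h
    · exact (hpf t ht s hs h).symm
  calc ∑ s ∈ S, 2 ^ (L - s.length) = ∑ s ∈ S, (E s).card :=
        Finset.sum_congr rfl fun s hs => (hcard s hs).symm
    _ = (S.biUnion E).card := (Finset.card_biUnion fun s hs t ht h => hdisj hs ht h).symm
    _ ≤ 2 ^ L := by
        have : ((S.biUnion E).image (fun t => fun i : Fin L => t.getD i false)).card
            ≤ (Finset.univ : Finset (Fin L → Bool)).card :=
          Finset.card_le_card (Finset.subset_univ _)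
        rw [Finset.card_image_of_injOn, Finset.card_univ, Fintype.card_fun,
          Fintype.card_bool, Fintype.card_fin] at this
        · exact this
        · intro a ha b hb hab
          simp only [Finset.mem_coe, Finset.mem_biUnion] at ha hb
          obtain ⟨s, hs, ha⟩ := ha
          obtain ⟨t, ht, hb⟩ := hb
          have hal := hlen s hs a ha
          have hbl := hlen t ht b hb
          refine List.ext_getElem (hal.trans hbl.symm) fun n h1 h2 => ?_
          have := congrFun hab ⟨n, hal ▸ h1⟩
          simp only [List.getD_eq_getElem?_getD] at this
          rwa [List.getElem?_eq_getElem (hal ▸ h1), List.getElem?_eq_getElem (hbl ▸ h2),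
            Option.getD_some, Option.getD_some] at this

lemma kraft_real (S : Finset (List Bool))
    (hpf : ∀ s ∈ S, ∀ t ∈ S, s <+: t → s = t) :
    ∑ s ∈ S, (2 : ℝ) ^ (-(s.length : ℝ)) ≤ 1 := by
  classical
  obtain ⟨L, hL⟩ : ∃ L, ∀ s ∈ S, s.length ≤ L :=
    ⟨(S.sup fun s => s.length), fun s hs => Finset.le_sup hs⟩
  have key := kraft_nat S hpf L hL
  have h2 : (0 : ℝ) < 2 ^ L := by positivity
  calc ∑ s ∈ S, (2 : ℝ) ^ (-(s.length : ℝ))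
        = (∑ s ∈ S, ((2 : ℕ) ^ (L - s.length) : ℝ)) / 2 ^ L := by
          rw [Finset.sum_div]
          refine Finset.sum_congr rfl fun s hs => ?_
          rw [eq_div_iff (ne_of_gt h2)]
          push_cast
          rw [← Real.rpow_natCast (2:ℝ) (L - s.length), ← Real.rpow_natCast (2:ℝ) L,
            ← Real.rpow_add (by norm_num)]
          congr 1
          push_cast [Nat.cast_sub (hL s hs)]
          ring
      _ ≤ 1 := by
          rw [div_le_one h2]
          calc (∑ s ∈ S, ((2:ℕ) ^ (L - s.length) : ℝ)) = ((∑ s ∈ S, 2 ^ (L - s.length) : ℕ) : ℝ) := by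
                push_cast; ring
            _ ≤ ((2 ^ L : ℕ) : ℝ) := by exact_mod_cast key
            _ = 2 ^ L := by push_cast; ring

/-- For a finite nonempty prefix-free set `S` of finite binary strings, `log₂ |S|` is at most
the average length of the strings in `S`; equivalently, `|S| ≤ 2 ^ ((∑ s ∈ S, |s|) / |S|)`. -/
theorem prefix_free_card_le (S : Finset (List Bool)) (hS : S.Nonempty)
    (hpf : ∀ s ∈ S, ∀ t ∈ S, s <+: t → s = t) :
    Real.logb 2 (S.card : ℝ) ≤ (∑ s ∈ S, (s.length : ℝ)) / (S.card : ℝ) ∧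
    (S.card : ℝ) ≤ (2 : ℝ) ^ ((∑ s ∈ S, (s.length : ℝ)) / (S.card : ℝ)) := by
  classical
  set N : ℝ := (S.card : ℝ) with hN
  have hN0 : (0 : ℝ) < N := by rw [hN]; exact_mod_cast Finset.card_pos.2 hS
  set A : ℝ := (∑ s ∈ S, (s.length : ℝ)) / N with hA
  have key : N ≤ (2 : ℝ) ^ A := by
    have hgm := Real.geom_mean_le_arith_mean_weighted S (fun _ => 1 / N)
      (fun s => (2 : ℝ) ^ (-(s.length : ℝ)))
      (fun s _ => by positivity)
      (by rw [Finset.sum_const, nsmul_eq_mul, ← hN]; exact mul_one_div_cancel hN0.ne')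
      (fun s _ => by positivity)
    have hprod : (∏ s ∈ S, ((2 : ℝ) ^ (-(s.length : ℝ))) ^ (1 / N)) = (2 : ℝ) ^ (-A) := by
      have hterm : ∀ s ∈ S, ((2 : ℝ) ^ (-(s.length : ℝ))) ^ (1 / N)
          = (2 : ℝ) ^ (-(s.length : ℝ) * (1 / N)) := fun s _ => by
        rw [← Real.rpow_mul (by norm_num : (0:ℝ) ≤ 2)]
      rw [Finset.prod_congr rfl hterm, ← Real.rpow_sum_of_pos (by norm_num : (0:ℝ) < 2)]
      congr 1
      rw [← Finset.sum_mul, Finset.sum_neg_distrib, hA]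
      ring
    have hsum : ∑ s ∈ S, (1 / N) * (2 : ℝ) ^ (-(s.length : ℝ)) ≤ 1 / N := by
      rw [← Finset.mul_sum]
      calc (1 / N) * ∑ s ∈ S, (2 : ℝ) ^ (-(s.length : ℝ)) ≤ (1 / N) * 1 :=
            mul_le_mul_of_nonneg_left (kraft_real S hpf) (by positivity)
        _ = 1 / N := mul_one _
    have h1 : (2 : ℝ) ^ (-A) ≤ 1 / N := hprod ▸ le_trans hgm hsum
    rw [Real.rpow_neg (by norm_num : (0:ℝ) ≤ 2), one_div] at h1
    exact (inv_le_inv₀ (by positivity) hN0).mp h1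
  refine ⟨?_, key⟩
  rw [Real.logb_le_iff_le_rpow (by norm_num) hN0]
  exact key
end

section
/- Let k ≥ 1, let F be a k-CNF formula over n Boolean variables, let α be a satisfying assignment of F, let I be the set of directions in which α is isolated, and for each i ∈ I fix a critical clause C_i of F for α and i (so C_i contains a literal of variable i made true by α and all other literals of C_i are made false by α, and C_i has at most k literals). If π is a uniformly random permutation of the n variables, then the expected number of directions i ∈ I such that variable i occurs after all other variables of C_i in the order π is at least |I|/k. -/
open Classical

-- symmetry: counts equal for each j in S
lemma perm_count_symm {n : ℕ} (S : Finset (Fin n)) (i j : Fin n) (hi : i ∈ S) (hj : j ∈ S) :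
    (Finset.univ.filter (fun π : Equiv.Perm (Fin n) => ∀ s ∈ S, s ≠ j → π s < π j)).card =
    (Finset.univ.filter (fun π : Equiv.Perm (Fin n) => ∀ s ∈ S, s ≠ i → π s < π i)).card := by
  have hswapmem : ∀ (a b : Fin n), a ∈ S → b ∈ S → ∀ (π : Equiv.Perm (Fin n)),
      (∀ s ∈ S, s ≠ b → π s < π b) → ∀ s ∈ S, s ≠ a → (π * Equiv.swap a b) s < (π * Equiv.swap a b) a := by
    intro i j hi hj π h s hs hsi
    have hii : (π * Equiv.swap i j) i = π j := by simp [Equiv.Perm.mul_apply]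
    rw [hii]
    have hmem : Equiv.swap i j s ∈ S := by
      rcases eq_or_ne s j with rfl | hsj
      · simpa using hi
      · rw [Equiv.swap_apply_of_ne_of_ne hsi hsj]; exact hs
    have hne : Equiv.swap i j s ≠ j := by
      intro hcon
      apply hsi
      have := congrArg (Equiv.swap i j) hcon
      simpa using this
    exact h _ hmem hne
  apply Finset.card_bij' (fun π _ => π * Equiv.swap i j) (fun π _ => π * Equiv.swap i j)
  · intro π hπ
    simp only [Finset.mem_filter, Finset.mem_univ, true_and] at hπ ⊢
    exact hswapmem i j hi hj π hπ
  · intro π hπ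
    simp only [Finset.mem_filter, Finset.mem_univ, true_and] at hπ ⊢
    rw [Equiv.swap_comm]
    exact hswapmem j i hj hi π hπ
  · intro π _; rw [mul_assoc, Equiv.swap_mul_self, mul_one]
  · intro π _; rw [mul_assoc, Equiv.swap_mul_self, mul_one]

lemma perm_count_key {n : ℕ} (S : Finset (Fin n)) (i : Fin n) (hi : i ∈ S) :
    S.card * (Finset.univ.filter (fun π : Equiv.Perm (Fin n) => ∀ s ∈ S, s ≠ i → π s < π i)).card
      = Nat.factorial n := by
  have huniq : ∀ π : Equiv.Perm (Fin n),
      (S.filter (fun j => ∀ s ∈ S, s ≠ j → π s < π j)).card = 1 := by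
    intro π
    obtain ⟨j0, hj0, hmax⟩ := S.exists_max_image π ⟨i, hi⟩
    rw [Finset.card_eq_one]
    refine ⟨j0, ?_⟩
    ext j
    simp only [Finset.mem_filter, Finset.mem_singleton]
    constructor
    · rintro ⟨hjS, hj⟩
      by_contra hne
      exact absurd (hmax j hjS) (not_le.mpr (hj j0 hj0 (Ne.symm hne)))
    · rintro rfl
      refine ⟨hj0, fun s hs hsj => lt_of_le_of_ne (hmax s hs) ?_⟩
      intro hcon
      exact hsj (π.injective hcon)
  have hsum : ∑ j ∈ S,
      (Finset.univ.filter (fun π : Equiv.Perm (Fin n) => ∀ s ∈ S, s ≠ j → π s < π j)).card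
      = Nat.factorial n := by
    simp_rw [Finset.card_filter]
    rw [Finset.sum_comm]
    have : ∀ π : Equiv.Perm (Fin n),
        (∑ j ∈ S, if ∀ s ∈ S, s ≠ j → π s < π j then 1 else 0) = 1 := by
      intro π
      rw [← Finset.card_filter]
      exact huniq π
    rw [Finset.sum_congr rfl (fun π _ => this π)]
    simp [Finset.card_univ, Fintype.card_perm]
  calc S.card * _ = ∑ j ∈ S,
      (Finset.univ.filter (fun π : Equiv.Perm (Fin n) => ∀ s ∈ S, s ≠ i → π s < π i)).card := by
        rw [Finset.sum_const, smul_eq_mul]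
    _ = _ := by rw [← hsum]; exact Finset.sum_congr rfl (fun j hj => (perm_count_symm S i j hi hj).symm)

theorem expected_last_in_critical_clause_ge' {n k : ℕ} (hk : 1 ≤ k)
    (I : Finset (Fin n))
    (Cc : Fin n → Finset (Fin n × Bool))
    (hlit : ∀ i ∈ I, ∃ b, (i, b) ∈ Cc i)
    (hcard : ∀ i ∈ I, (Cc i).card ≤ k) :
    (I.card : ℝ) / (k : ℝ) ≤
      (∑ π : Equiv.Perm (Fin n),
          ((I.filter fun i => ∀ l ∈ Cc i, l.1 ≠ i → π l.1 < π i).card : ℝ)) /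
        (Nat.factorial n : ℝ) := by
  have hkpos : (0:ℝ) < (k:ℝ) := by exact_mod_cast hk
  have hfac : (0:ℝ) < (Nat.factorial n : ℝ) := by exact_mod_cast Nat.factorial_pos n
  rw [div_le_div_iff₀ hkpos hfac]
  have hsum : (∑ π : Equiv.Perm (Fin n),
      ((I.filter fun i => ∀ l ∈ Cc i, l.1 ≠ i → π l.1 < π i).card : ℕ))
      = ∑ i ∈ I, (Finset.univ.filter
          (fun π : Equiv.Perm (Fin n) => ∀ l ∈ Cc i, l.1 ≠ i → π l.1 < π i)).card := by
    simp_rw [Finset.card_filter]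
    rw [Finset.sum_comm]
  have key : ∀ i ∈ I, Nat.factorial n ≤ k * (Finset.univ.filter
      (fun π : Equiv.Perm (Fin n) => ∀ l ∈ Cc i, l.1 ≠ i → π l.1 < π i)).card := by
    intro i hiI
    obtain ⟨b, hb⟩ := hlit i hiI
    set S : Finset (Fin n) := (Cc i).image Prod.fst with hS
    have hiS : i ∈ S := Finset.mem_image.mpr ⟨(i, b), hb, rfl⟩
    have hfilter_eq : (Finset.univ.filter
        (fun π : Equiv.Perm (Fin n) => ∀ l ∈ Cc i, l.1 ≠ i → π l.1 < π i))
        = (Finset.univ.filter (fun π : Equiv.Perm (Fin n) => ∀ s ∈ S, s ≠ i → π s < π i)) := by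
      apply Finset.filter_congr
      intro π _
      constructor
      · intro h s hs hsi
        obtain ⟨l, hl, rfl⟩ := Finset.mem_image.mp hs
        exact h l hl hsi
      · intro h l hl hli
        exact h l.1 (Finset.mem_image.mpr ⟨l, hl, rfl⟩) hli
    rw [hfilter_eq, ← perm_count_key S i hiS]
    apply Nat.mul_le_mul_right
    exact le_trans (Finset.card_image_le) (hcard i hiI)
  have hnat : I.card * Nat.factorial n ≤
      (∑ π : Equiv.Perm (Fin n),
        ((I.filter fun i => ∀ l ∈ Cc i, l.1 ≠ i → π l.1 < π i).card : ℕ)) * k := by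
    rw [hsum, Finset.sum_mul]
    calc I.card * Nat.factorial n = ∑ _i ∈ I, Nat.factorial n := by
          rw [Finset.sum_const, smul_eq_mul]
      _ ≤ _ := Finset.sum_le_sum (fun i hi => by rw [mul_comm]; exact key i hi)
  exact_mod_cast hnat

/-- Satisfiability Coding Lemma (key counting step): let `F` be a `k`-CNF with `k ≥ 1`,
let `α` be a satisfying assignment, let `I` be the set of directions in which `α` is
isolated, and for each `i ∈ I` fix a critical clause `Cc i` of `F` for `α` and `i`.
For a uniformly random permutation `π` of the `n` variables, the expected number of
directions `i ∈ I` such that variable `i` occurs after all other variables of `Cc i`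
in the order `π` is at least `|I| / k`. -/
theorem expected_last_in_critical_clause_ge {n k : ℕ} (hk : 1 ≤ k)
    (F : Finset (Finset (Fin n × Bool))) (hkcnf : ∀ C ∈ F, C.card ≤ k)
    (α : Fin n → Bool) (hsat : Satisfies F α)
    (I : Finset (Fin n)) (hI : ∀ i : Fin n, i ∈ I ↔ ¬ Satisfies F (flipAt α i))
    (Cc : Fin n → Finset (Fin n × Bool))
    (hmem : ∀ i ∈ I, Cc i ∈ F)
    (hlit : ∀ i ∈ I, (i, α i) ∈ Cc i)
    (hfalse : ∀ i ∈ I, ∀ l ∈ Cc i, l ≠ (i, α i) → α l.1 ≠ l.2)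
    (hcard : ∀ i ∈ I, (Cc i).card ≤ k) :
    (I.card : ℝ) / (k : ℝ) ≤
      (∑ π : Equiv.Perm (Fin n),
          ((I.filter fun i => ∀ l ∈ Cc i, l.1 ≠ i → π l.1 < π i).card : ℝ)) /
        (Nat.factorial n : ℝ) := by
  exact expected_last_in_critical_clause_ge' hk I Cc
    (fun i hi => ⟨α i, hlit i hi⟩) hcard
end

section
/- Every DeMorgan formula computing the parity function on n ≥ 1 variables has leaf size at least n^(3/2); that is, L(parity_n) ≥ n^(3/2). -/
/-- A DeMorgan formula over `n` variables: leaves are literals `x_i` / `¬x_i` or Boolean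
constants, internal nodes are fanin-two ANDs and ORs. -/
inductive DeMorgan (n : ℕ) : Type where
  | lit : Fin n → Bool → DeMorgan n
  | const : Bool → DeMorgan n
  | and : DeMorgan n → DeMorgan n → DeMorgan n
  | or : DeMorgan n → DeMorgan n → DeMorgan n

/-- Evaluation of a DeMorgan formula; the literal `lit i b` evaluates to `α i` if `b = true`
and to `¬ α i` if `b = false`. -/
def DeMorgan.eval {n : ℕ} : DeMorgan n → (Fin n → Bool) → Bool
  | .lit i b, α => if b then α i else !(α i)
  | .const b, _ => b
  | .and f g, α => f.eval α && g.eval α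
  | .or f g, α => f.eval α || g.eval α

/-- The leaf size of a DeMorgan formula: the number of literal leaves. -/
def DeMorgan.leafSize {n : ℕ} : DeMorgan n → ℕ
  | .lit _ _ => 1
  | .const _ => 0
  | .and f g => f.leafSize + g.leafSize
  | .or f g => f.leafSize + g.leafSize

/-- `L f` is the minimum leaf size of a DeMorgan formula computing `f`. -/
noncomputable def L {n : ℕ} (f : (Fin n → Bool) → Bool) : ℕ :=
  sInf {m : ℕ | ∃ φ : DeMorgan n, φ.eval = f ∧ φ.leafSize = m}

/-- The parity function on `n` variables: the XOR of all coordinates. -/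
def parity (n : ℕ) (α : Fin n → Bool) : Bool :=
  (∑ i : Fin n, (α i).toNat) % 2 == 1

def diffCount {n : ℕ} (a b : Fin n → Bool) : ℕ := (Finset.univ.filter fun i => a i ≠ b i).card

lemma diffCount_eq_one_iff {n : ℕ} (a b : Fin n → Bool) :
    diffCount a b = 1 ↔ ∃ i, b = Function.update a i (!(a i)) := by
  constructor
  · intro h
    obtain ⟨i, hi⟩ := Finset.card_eq_one.mp h
    refine ⟨i, funext fun j => ?_⟩
    by_cases hji : j = i
    · subst hji
      have : j ∈ Finset.univ.filter fun k => a k ≠ b k := by rw [hi]; exact Finset.mem_singleton_self j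
      have := (Finset.mem_filter.mp this).2
      simp only [Function.update_self]
      cases h' : a j <;> cases h'' : b j <;> simp_all
    · have : j ∉ Finset.univ.filter fun k => a k ≠ b k := by
        rw [hi]; simpa using hji
      simp only [Finset.mem_filter, Finset.mem_univ, true_and, not_not] at this
      rw [Function.update_of_ne hji, this]
  · rintro ⟨i, rfl⟩
    have : (Finset.univ.filter fun k => a k ≠ Function.update a i (!(a i)) k) = {i} := by
      ext j
      simp only [Finset.mem_filter, Finset.mem_univ, true_and, Finset.mem_singleton]
      constructor
      · intro h
        by_contra hji
        rw [Function.update_of_ne hji] at h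
        exact h rfl
      · rintro rfl
        rw [Function.update_self]
        cases a j <;> simp
    unfold diffCount
    rw [this]; rfl

lemma update_flip_injective {n : ℕ} (a : Fin n → Bool) :
    Function.Injective (fun i => Function.update a i (!(a i))) := by
  intro i j hij
  by_contra hne
  have := congrFun hij i
  simp only [Function.update_self, Function.update_of_ne (Ne.symm hne)] at this
  cases a i <;> simp_all


lemma aux4 (x y : ℕ) : 4*x*y ≤ (x+y)^2 := by zify; nlinarith [sq_nonneg ((x:ℤ) - y)]

lemma arith (c1 c2 s1 s2 a b1 b2 : ℕ) (h1 : c1^2 ≤ s1*a*b1) (h2 : c2^2 ≤ s2*a*b2) :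
    (c1+c2)^2 ≤ (s1+s2)*a*(b1+b2) := by
  have key : (2*(c1*c2))^2 ≤ (a*(s1*b2+s2*b1))^2 := by
    have h3 : (c1^2)*(c2^2) ≤ (s1*a*b1)*(s2*a*b2) := Nat.mul_le_mul h1 h2
    have h4 := aux4 (s1*b2) (s2*b1)
    calc (2*(c1*c2))^2 = 4*((c1^2)*(c2^2)) := by ring
      _ ≤ 4*((s1*a*b1)*(s2*a*b2)) := by omega
      _ = a^2 * (4*(s1*b2)*(s2*b1)) := by ring
      _ ≤ a^2 * ((s1*b2)+(s2*b1))^2 := Nat.mul_le_mul_left _ h4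
      _ = (a*(s1*b2+s2*b1))^2 := by ring
  have key2 : 2*(c1*c2) ≤ a*(s1*b2+s2*b1) := (Nat.pow_le_pow_iff_left two_ne_zero).mp key
  calc (c1+c2)^2 = c1^2 + 2*(c1*c2) + c2^2 := by ring
    _ ≤ s1*a*b1 + a*(s1*b2+s2*b1) + s2*a*b2 := by omega
    _ = (s1+s2)*a*(b1+b2) := by ring

lemma diffCount_comm {n : ℕ} (a b : Fin n → Bool) : diffCount a b = diffCount b a := by
  unfold diffCount
  congr 1
  exact Finset.filter_congr fun i _ => by rw [ne_comm]

lemma eq_update_of_diffCount {n : ℕ} {a b : Fin n → Bool} {i : Fin n}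
    (hne : a i ≠ b i) (h : diffCount a b = 1) : b = Function.update a i (!(a i)) := by
  obtain ⟨j, rfl⟩ := (diffCount_eq_one_iff a b).mp h
  by_cases hji : j = i
  · subst hji; rfl
  · rw [Function.update_of_ne (Ne.symm hji)] at hne
    exact absurd rfl hne

def CC {n : ℕ} (A B : Finset (Fin n → Bool)) : ℕ :=
  ((A ×ˢ B).filter fun p => diffCount p.1 p.2 = 1).card

lemma khrap {n : ℕ} (φ : DeMorgan n) :
    ∀ A B : Finset (Fin n → Bool), (∀ a ∈ A, φ.eval a = true) → (∀ b ∈ B, φ.eval b = false) →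
    (CC A B)^2 ≤ φ.leafSize * A.card * B.card := by
  induction φ with
  | lit i v =>
    intro A B hA hB
    have hAi : ∀ a ∈ A, a i = v := by
      intro a ha
      have := hA a ha
      cases v <;> simp_all [DeMorgan.eval]
    have hBi : ∀ b ∈ B, b i = !v := by
      intro b hb
      have := hB b hb
      cases v <;> simp_all [DeMorgan.eval]
    have h1 : CC A B ≤ A.card := by
      apply Finset.card_le_card_of_injOn Prod.fst
      · intro p hp; exact (Finset.mem_product.mp (Finset.mem_filter.mp hp).1).1
      · intro p hp q hq hpq
        obtain ⟨hpP, hpD⟩ := Finset.mem_filter.mp hp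
        obtain ⟨hqP, hqD⟩ := Finset.mem_filter.mp hq
        obtain ⟨hpa, hpb⟩ := Finset.mem_product.mp hpP
        obtain ⟨hqa, hqb⟩ := Finset.mem_product.mp hqP
        have e1 : p.1 i ≠ p.2 i := by rw [hAi _ hpa, hBi _ hpb]; cases v <;> simp
        have e2 : q.1 i ≠ q.2 i := by rw [hAi _ hqa, hBi _ hqb]; cases v <;> simp
        have := eq_update_of_diffCount e1 hpD
        have := eq_update_of_diffCount e2 hqD
        exact Prod.ext hpq (by simp_all)
    have h2 : CC A B ≤ B.card := by
      apply Finset.card_le_card_of_injOn Prod.snd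
      · intro p hp; exact (Finset.mem_product.mp (Finset.mem_filter.mp hp).1).2
      · intro p hp q hq hpq
        obtain ⟨hpP, hpD⟩ := Finset.mem_filter.mp hp
        obtain ⟨hqP, hqD⟩ := Finset.mem_filter.mp hq
        obtain ⟨hpa, hpb⟩ := Finset.mem_product.mp hpP
        obtain ⟨hqa, hqb⟩ := Finset.mem_product.mp hqP
        have e1 : p.2 i ≠ p.1 i := by rw [hAi _ hpa, hBi _ hpb]; cases v <;> simp
        have e2 : q.2 i ≠ q.1 i := by rw [hAi _ hqa, hBi _ hqb]; cases v <;> simp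
        have := eq_update_of_diffCount e1 ((diffCount_comm p.1 p.2) ▸ hpD)
        have := eq_update_of_diffCount e2 ((diffCount_comm q.1 q.2) ▸ hqD)
        exact Prod.ext (by simp_all) hpq
    calc (CC A B)^2 = CC A B * CC A B := sq (CC A B) ▸ rfl
      _ ≤ A.card * B.card := Nat.mul_le_mul h1 h2
      _ = 1 * A.card * B.card := by ring
      _ = DeMorgan.leafSize (.lit i v) * A.card * B.card := rfl
  | const b =>
    intro A B hA hB
    cases b with
    | true =>
      have : B = ∅ := Finset.eq_empty_of_forall_notMem fun b hb => by
        have := hB b hb; simp [DeMorgan.eval] at this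
      simp [CC, this, DeMorgan.leafSize]
    | false =>
      have : A = ∅ := Finset.eq_empty_of_forall_notMem fun a ha => by
        have := hA a ha; simp [DeMorgan.eval] at this
      simp [CC, this, DeMorgan.leafSize]

  | and φ ψ ihφ ihψ =>
    intro A B hA hB
    classical
    set B1 := B.filter fun b => φ.eval b = false with hB1
    set B2 := B \ B1 with hB2
    have hsub : B1 ⊆ B := Finset.filter_subset _ _
    have hBu : B = B1 ∪ B2 := by
      rw [hB2, Finset.union_sdiff_self_eq_union, Finset.union_eq_right.mpr hsub]
    have hcard : B.card = B1.card + B2.card := by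
      have := Finset.card_sdiff_add_card_eq_card hsub
      rw [hB2]
      omega
    have hle : CC A B ≤ CC A B1 + CC A B2 := by
      unfold CC
      rw [hBu, Finset.product_union, Finset.filter_union]
      exact Finset.card_union_le _ _
    have hA1 : ∀ a ∈ A, φ.eval a = true := fun a ha => by
      have := hA a ha; simp [DeMorgan.eval] at this; exact this.1
    have hA2 : ∀ a ∈ A, ψ.eval a = true := fun a ha => by
      have := hA a ha; simp [DeMorgan.eval] at this; exact this.2
    have hBf1 : ∀ b ∈ B1, φ.eval b = false := fun b hb => (Finset.mem_filter.mp hb).2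
    have hBf2 : ∀ b ∈ B2, ψ.eval b = false := fun b hb => by
      obtain ⟨hbB, hbn⟩ := Finset.mem_sdiff.mp hb
      have h1 : φ.eval b = true := by
        rcases Bool.eq_false_or_eq_true (φ.eval b) with h | h
        · exact h
        · exact absurd (Finset.mem_filter.mpr ⟨hbB, h⟩) hbn
      have := hB b hbB
      simp [DeMorgan.eval, h1] at this
      exact this
    have k1 := ihφ A B1 hA1 hBf1
    have k2 := ihψ A B2 hA2 hBf2
    calc (CC A B)^2 ≤ (CC A B1 + CC A B2)^2 := Nat.pow_le_pow_left hle 2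
      _ ≤ (φ.leafSize + ψ.leafSize) * A.card * (B1.card + B2.card) := arith _ _ _ _ _ _ _ k1 k2
      _ = (DeMorgan.and φ ψ).leafSize * A.card * B.card := by rw [← hcard]; rfl
  | or φ ψ ihφ ihψ =>
    intro A B hA hB
    classical
    set A1 := A.filter fun a => φ.eval a = true with hA1
    set A2 := A \ A1 with hA2
    have hsub : A1 ⊆ A := Finset.filter_subset _ _
    have hAu : A = A1 ∪ A2 := by
      rw [hA2, Finset.union_sdiff_self_eq_union, Finset.union_eq_right.mpr hsub]
    have hcard : A.card = A1.card + A2.card := by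
      have := Finset.card_sdiff_add_card_eq_card hsub
      rw [hA2]
      omega
    have hle : CC A B ≤ CC A1 B + CC A2 B := by
      unfold CC
      rw [hAu, Finset.union_product, Finset.filter_union]
      exact Finset.card_union_le _ _
    have hB1 : ∀ b ∈ B, φ.eval b = false := fun b hb => by
      have := hB b hb; simp [DeMorgan.eval] at this; exact this.1
    have hB2 : ∀ b ∈ B, ψ.eval b = false := fun b hb => by
      have := hB b hb; simp [DeMorgan.eval] at this; exact this.2
    have hAf1 : ∀ a ∈ A1, φ.eval a = true := fun a ha => (Finset.mem_filter.mp ha).2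
    have hAf2 : ∀ a ∈ A2, ψ.eval a = true := fun a ha => by
      obtain ⟨haA, han⟩ := Finset.mem_sdiff.mp ha
      have h1 : φ.eval a = false := by
        rcases Bool.eq_false_or_eq_true (φ.eval a) with h | h
        · exact absurd (Finset.mem_filter.mpr ⟨haA, h⟩) han
        · exact h
      have := hA a haA
      simp [DeMorgan.eval, h1] at this
      exact this
    have k1 := ihφ A1 B hAf1 hB1
    have k2 := ihψ A2 B hAf2 hB2
    have k1' : (CC A1 B)^2 ≤ φ.leafSize * B.card * A1.card := by
      calc (CC A1 B)^2 ≤ φ.leafSize * A1.card * B.card := k1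
        _ = φ.leafSize * B.card * A1.card := by ring
    have k2' : (CC A2 B)^2 ≤ ψ.leafSize * B.card * A2.card := by
      calc (CC A2 B)^2 ≤ ψ.leafSize * A2.card * B.card := k2
        _ = ψ.leafSize * B.card * A2.card := by ring
    calc (CC A B)^2 ≤ (CC A1 B + CC A2 B)^2 := Nat.pow_le_pow_left hle 2
      _ ≤ (φ.leafSize + ψ.leafSize) * B.card * (A1.card + A2.card) := arith _ _ _ _ _ _ _ k1' k2'
      _ = (DeMorgan.or φ ψ).leafSize * A.card * B.card := by rw [← hcard]; show _ = (φ.leafSize + ψ.leafSize) * A.card * B.card; ring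

lemma parity_flip {n : ℕ} (a : Fin n → Bool) (i : Fin n) :
    parity n (Function.update a i (!(a i))) = !(parity n a) := by
  unfold parity
  have h1 : ∑ j : Fin n, (Function.update a i (!(a i)) j).toNat
      = ∑ j : Fin n, Function.update (fun j => (a j).toNat) i (!(a i)).toNat j := by
    apply Finset.sum_congr rfl
    intro j _
    by_cases hj : j = i
    · subst hj; simp
    · rw [Function.update_of_ne hj, Function.update_of_ne hj]
  rw [h1, Finset.sum_update_of_mem (Finset.mem_univ i)]
  have h2 : ∑ j : Fin n, (a j).toNat = (a i).toNat + ∑ j ∈ Finset.univ \ {i}, (a j).toNat := by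
    rw [add_comm, Finset.sum_eq_sum_sdiff_singleton_add (Finset.mem_univ i)]
  rw [h2]
  set S := ∑ j ∈ Finset.univ \ {i}, (a j).toNat with hS
  cases a i
  · simp only [Bool.not_false, Bool.toNat_true, Bool.toNat_false]
    rcases Nat.mod_two_eq_zero_or_one S with h | h
    · rw [show (1 + S) % 2 = 1 by omega, show (0 + S) % 2 = 0 by omega]; rfl
    · rw [show (1 + S) % 2 = 0 by omega, show (0 + S) % 2 = 1 by omega]; rfl
  · simp only [Bool.not_true, Bool.toNat_true, Bool.toNat_false]
    rcases Nat.mod_two_eq_zero_or_one S with h | h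
    · rw [show (0 + S) % 2 = 0 by omega, show (1 + S) % 2 = 1 by omega]; rfl
    · rw [show (0 + S) % 2 = 1 by omega, show (1 + S) % 2 = 0 by omega]; rfl

lemma card_filter_prod {X : Type*} [DecidableEq X] (s t : Finset X) (P : X → X → Prop)
    [∀ a b, Decidable (P a b)] :
    ((s ×ˢ t).filter fun p => P p.1 p.2).card = ∑ a ∈ s, (t.filter (fun b => P a b)).card := by
  rw [Finset.card_eq_sum_card_fiberwise
    (f := Prod.fst) (t := s)
    (fun p hp => (Finset.mem_product.mp (Finset.mem_filter.mp hp).1).1)]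
  apply Finset.sum_congr rfl
  intro a ha
  rw [show (((s ×ˢ t).filter fun p => P p.1 p.2).filter fun p => p.1 = a)
      = (t.filter fun b => P a b).image (fun b => (a, b)) from ?_]
  · rw [Finset.card_image_of_injective _ (fun x y h => (Prod.mk.injEq _ _ _ _).mp h |>.2)]
  · ext ⟨x, y⟩
    simp only [Finset.mem_filter, Finset.mem_product, Finset.mem_image, Prod.mk.injEq]
    constructor
    · rintro ⟨⟨⟨hx, hy⟩, hP⟩, rfl⟩
      exact ⟨y, ⟨hy, hP⟩, rfl, rfl⟩
    · rintro ⟨b, ⟨hb, hP⟩, rfl, rfl⟩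
      exact ⟨⟨⟨ha, hb⟩, hP⟩, rfl⟩

lemma inner_card {n : ℕ} (a : Fin n → Bool) (c : Bool) (hc : parity n a = !c) :
    ((Finset.univ.filter fun b => parity n b = c).filter fun b => diffCount a b = 1).card = n := by
  have : ((Finset.univ.filter fun b => parity n b = c).filter fun b => diffCount a b = 1)
      = Finset.univ.image (fun i => Function.update a i (!(a i))) := by
    ext b
    simp only [Finset.mem_filter, Finset.mem_univ, true_and, Finset.mem_image]
    constructor
    · rintro ⟨_, hd⟩
      obtain ⟨i, rfl⟩ := (diffCount_eq_one_iff a b).mp hd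
      exact ⟨i, rfl⟩
    · rintro ⟨i, rfl⟩
      refine ⟨?_, (diffCount_eq_one_iff a _).mpr ⟨i, rfl⟩⟩
      rw [parity_flip, hc]
      cases c <;> rfl
  rw [this, Finset.card_image_of_injective _ (update_flip_injective a)]
  simp

lemma CC_comm {n : ℕ} (A B : Finset (Fin n → Bool)) : CC A B = CC B A := by
  unfold CC
  rw [← Finset.card_image_of_injective
    ((B ×ˢ A).filter fun p => diffCount p.1 p.2 = 1) Prod.swap_injective]
  congr 1
  ext ⟨x, y⟩
  simp only [Finset.mem_filter, Finset.mem_product, Finset.mem_image, Prod.exists, Prod.swap_prod_mk,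
    Prod.mk.injEq]
  constructor
  · rintro ⟨⟨hx, hy⟩, hd⟩
    exact ⟨y, x, ⟨⟨hy, hx⟩, (diffCount_comm x y) ▸ hd⟩, rfl, rfl⟩
  · rintro ⟨a, b, ⟨⟨ha, hb⟩, hd⟩, rfl, rfl⟩
    exact ⟨⟨hb, ha⟩, (diffCount_comm a b) ▸ hd⟩

lemma leafSize_ge {n : ℕ} (hn : 1 ≤ n) (φ : DeMorgan n) (h : φ.eval = parity n) :
    n^2 ≤ φ.leafSize := by
  classical
  set O := Finset.univ.filter fun a => parity n a = true with hO
  set E := Finset.univ.filter fun b => parity n b = false with hE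
  have hCCOE : CC O E = O.card * n := by
    unfold CC
    rw [card_filter_prod O E (fun a b => diffCount a b = 1)]
    rw [Finset.sum_congr rfl (fun a ha => inner_card a false
      (by simpa using (Finset.mem_filter.mp ha).2))]
    simp [mul_comm]
  have hCCEO : CC E O = E.card * n := by
    unfold CC
    rw [card_filter_prod E O (fun a b => diffCount a b = 1)]
    rw [Finset.sum_congr rfl (fun a ha => inner_card a true
      (by simpa using (Finset.mem_filter.mp ha).2))]
    simp [mul_comm]
  have hOpos : 0 < O.card := by
    refine Finset.card_pos.mpr ⟨fun j => decide (j = ⟨0, hn⟩), ?_⟩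
    rw [hO, Finset.mem_filter]
    refine ⟨Finset.mem_univ _, ?_⟩
    unfold parity
    have : ∑ j : Fin n, (decide (j = (⟨0, hn⟩ : Fin n))).toNat = 1 := by
      rw [show (fun j => (decide (j = (⟨0, hn⟩ : Fin n))).toNat)
          = fun j => if j = (⟨0, hn⟩ : Fin n) then 1 else 0 from funext fun j => by
        by_cases hj : j = (⟨0, hn⟩ : Fin n) <;> simp [hj]]
      simp
    rw [this]
    rfl
  have hEpos : 0 < E.card := by
    refine Finset.card_pos.mpr ⟨fun _ => false, ?_⟩
    rw [hE, Finset.mem_filter]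
    exact ⟨Finset.mem_univ _, by unfold parity; simp⟩
  have k := khrap φ O E
    (fun a ha => by rw [h]; exact (Finset.mem_filter.mp ha).2)
    (fun b hb => by rw [h]; exact (Finset.mem_filter.mp hb).2)
  have key : n^2 * (O.card * E.card) ≤ φ.leafSize * (O.card * E.card) := by
    calc n^2 * (O.card * E.card) = (O.card * n) * (E.card * n) := by ring
      _ = CC O E * CC E O := by rw [hCCOE, hCCEO]
      _ = (CC O E)^2 := by rw [← CC_comm]; ring
      _ ≤ φ.leafSize * O.card * E.card := k
      _ = φ.leafSize * (O.card * E.card) := by ring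
  exact Nat.le_of_mul_le_mul_right (by simpa [mul_comm] using key) (Nat.mul_pos hOpos hEpos)

def DeMorgan.rename {m n : ℕ} (e : Fin m → Fin n) : DeMorgan m → DeMorgan n
  | .lit i b => .lit (e i) b
  | .const b => .const b
  | .and f g => .and (f.rename e) (g.rename e)
  | .or f g => .or (f.rename e) (g.rename e)

lemma DeMorgan.eval_rename {m n : ℕ} (e : Fin m → Fin n) (φ : DeMorgan m) (α : Fin n → Bool) :
    (φ.rename e).eval α = φ.eval (α ∘ e) := by
  induction φ with
  | lit i b => rfl
  | const b => rfl
  | and f g ihf ihg => simp [rename, eval, ihf, ihg]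
  | or f g ihf ihg => simp [rename, eval, ihf, ihg]

lemma parity_succ (n : ℕ) (α : Fin (n+1) → Bool) :
    parity (n+1) α = xor (parity n (α ∘ Fin.castSucc)) (α (Fin.last n)) := by
  unfold parity
  rw [Fin.sum_univ_castSucc]
  simp only [Function.comp_apply]
  set S := ∑ i : Fin n, (α i.castSucc).toNat with hS
  cases α (Fin.last n)
  · simp only [Bool.toNat_false, add_zero, Bool.xor_false]
  · simp only [Bool.toNat_true, Bool.xor_true]
    rcases Nat.mod_two_eq_zero_or_one S with h | h
    · rw [show (S + 1) % 2 = 1 by omega, h]; rfl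
    · rw [show (S + 1) % 2 = 0 by omega, h]; rfl

def parityFormula : (n : ℕ) → DeMorgan n × DeMorgan n
  | 0 => (.const false, .const true)
  | n+1 =>
    let p := parityFormula n
    let u := p.1.rename Fin.castSucc
    let v := p.2.rename Fin.castSucc
    (.or (.and u (.lit (Fin.last n) false)) (.and v (.lit (Fin.last n) true)),
     .or (.and u (.lit (Fin.last n) true)) (.and v (.lit (Fin.last n) false)))

lemma parityFormula_eval (n : ℕ) :
    (parityFormula n).1.eval = parity n ∧ (parityFormula n).2.eval = fun α => !(parity n α) := by
  induction n with
  | zero =>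
    constructor <;> funext α <;> simp [parityFormula, DeMorgan.eval, parity]
  | succ n ih =>
    obtain ⟨ih1, ih2⟩ := ih
    constructor <;> funext α <;>
    · simp only [parityFormula, DeMorgan.eval, DeMorgan.eval_rename, ih1, ih2, parity_succ]
      cases parity n (α ∘ Fin.castSucc) <;> cases α (Fin.last n) <;> rfl



/-- Subbotovskaya's lower bound: every DeMorgan formula computing the parity function on
`n ≥ 1` variables has leaf size at least `n^(3/2)`. -/
theorem parity_leafSize_lower_bound {n : ℕ} (hn : 1 ≤ n) :
    (n : ℝ) ^ ((3 : ℝ) / 2) ≤ (L (parity n) : ℝ) := by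
  have hne : {m : ℕ | ∃ φ : DeMorgan n, φ.eval = parity n ∧ φ.leafSize = m}.Nonempty :=
    ⟨(parityFormula n).1.leafSize, (parityFormula n).1, (parityFormula_eval n).1, rfl⟩
  obtain ⟨φ, hφeval, hφsize⟩ := Nat.sInf_mem hne
  have hL : n^2 ≤ L (parity n) := by unfold L; rw [← hφsize]; exact leafSize_ge hn φ hφeval
  have h1 : (n : ℝ) ^ ((3 : ℝ) / 2) ≤ (n : ℝ) ^ (2 : ℝ) :=
    Real.rpow_le_rpow_of_exponent_le (by exact_mod_cast hn) (by norm_num)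
  calc (n : ℝ) ^ ((3 : ℝ) / 2) ≤ (n : ℝ) ^ (2 : ℝ) := h1
    _ = ((n^2 : ℕ) : ℝ) := by rw [show ((2:ℝ)) = ((2:ℕ):ℝ) by norm_num, Real.rpow_natCast]
                              push_cast; ring
    _ ≤ (L (parity n) : ℝ) := by exact_mod_cast hL
end

section
/- Let F be a 2-CNF formula whose variable set is partitioned into three sets A, B, C, and classify each clause by the pair of sets containing its variables into the six types T_a, T_b, T_c, T_ab, T_bc, T_ac. Fix target counts s_a, s_b, s_c, s_ab, s_bc, s_ac. Define a tripartite graph whose vertex parts are: V_A = assignments to A satisfying exactly s_a clauses of type T_a, V_B = assignments to B satisfying exactly s_b clauses of type T_b, V_C = assignments to C satisfying exactly s_c clauses of type T_c; and where u ∈ V_A and v ∈ V_B are adjacent iff the combined assignment u ∪ v satisfies exactly s_ab clauses of type T_ab, and similarly for the pairs (V_B, V_C) with s_bc and (V_A, V_C) with s_ac. Then there exists a full assignment to the variables of F satisfying exactly s_D clauses of type T_D for each of the six types D if and only if the graph contains a triangle with one vertex in each of V_A, V_B, V_C. -/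
open Classical

/-- The set of variables occurring in a clause (a clause is a finite set of literals, a
literal being a pair of a variable and a Boolean sign). -/
def varsOf {V : Type*} [DecidableEq V] (C : Finset (V × Bool)) : Finset V :=
  C.image Prod.fst

/-- An assignment `σ` to the variables in the subset `S` satisfies a clause `C` if it makes
true some literal of `C` whose variable lies in `S`. -/
def SatOn {V : Type*} (S : Finset V) (σ : V → Bool) (C : Finset (V × Bool)) : Prop :=
  ∃ l ∈ C, l.1 ∈ S ∧ σ l.1 = l.2

lemma pure_iff {V : Type*} [DecidableEq V] {A : Finset V} {Cl : Finset (V × Bool)}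
    (hsub : varsOf Cl ⊆ A) {τ σ : V → Bool} (h : ∀ v ∈ A, τ v = σ v) :
    (∃ l ∈ Cl, τ l.1 = l.2) ↔ SatOn A σ Cl := by
  constructor
  · rintro ⟨l, hl, hτ⟩
    have hmem : l.1 ∈ A := hsub (Finset.mem_image_of_mem _ hl)
    exact ⟨l, hl, hmem, by rw [← h l.1 hmem]; exact hτ⟩
  · rintro ⟨l, hl, hmem, hσ⟩
    exact ⟨l, hl, by rw [h l.1 hmem]; exact hσ⟩

lemma cross_iff {V : Type*} [DecidableEq V] {A B : Finset V} (hAB : Disjoint A B)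
    {Cl : Finset (V × Bool)} (h2 : Cl.card ≤ 2)
    (hA : ∃ v ∈ varsOf Cl, v ∈ A) (hB : ∃ v ∈ varsOf Cl, v ∈ B)
    {τ σA σB : V → Bool} (ha : ∀ v ∈ A, τ v = σA v) (hb : ∀ v ∈ B, τ v = σB v) :
    (∃ l ∈ Cl, τ l.1 = l.2) ↔ (SatOn A σA Cl ∨ SatOn B σB Cl) := by
  obtain ⟨a, haCl, haA⟩ := hA
  obtain ⟨b, hbCl, hbB⟩ := hB
  have hab : a ≠ b := fun h => Finset.disjoint_left.mp hAB haA (h ▸ hbB)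
  have hcard : (varsOf Cl).card ≤ 2 := le_trans (Finset.card_image_le) h2
  have hsub : ({a, b} : Finset V) ⊆ varsOf Cl := by
    intro x hx
    rcases Finset.mem_insert.mp hx with h | h
    · exact h ▸ haCl
    · exact (Finset.mem_singleton.mp h) ▸ hbCl
  have hcard2 : ({a, b} : Finset V).card = 2 := Finset.card_pair hab
  have heq : varsOf Cl = {a, b} :=
    (Finset.eq_of_subset_of_card_le hsub (hcard2 ▸ hcard)).symm
  have hvars : ∀ l ∈ Cl, l.1 ∈ A ∪ B := by
    intro l hl
    have : l.1 ∈ varsOf Cl := Finset.mem_image_of_mem _ hl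
    rw [heq] at this
    rcases Finset.mem_insert.mp this with h | h
    · exact Finset.mem_union_left _ (h ▸ haA)
    · exact Finset.mem_union_right _ ((Finset.mem_singleton.mp h) ▸ hbB)
  constructor
  · rintro ⟨l, hl, hτ⟩
    rcases Finset.mem_union.mp (hvars l hl) with h | h
    · exact Or.inl ⟨l, hl, h, by rw [← ha l.1 h]; exact hτ⟩
    · exact Or.inr ⟨l, hl, h, by rw [← hb l.1 h]; exact hτ⟩
  · rintro (⟨l, hl, hm, hσ⟩ | ⟨l, hl, hm, hσ⟩)
    · exact ⟨l, hl, by rw [ha l.1 hm]; exact hσ⟩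
    · exact ⟨l, hl, by rw [hb l.1 hm]; exact hσ⟩

lemma card_filter_congr {α : Type*} {s : Finset α} {p q : α → Prop}
    (hp : DecidablePred p) (hq : DecidablePred q) (h : ∀ x ∈ s, p x ↔ q x) :
    (@Finset.filter α p hp s).card = (@Finset.filter α q hq s).card := by
  exact congrArg Finset.card (@Finset.filter_congr _ _ _ hp hq _ h)

/-- Williams' MAX-2-SAT reduction: let `F` be a 2-CNF whose variable set is partitioned into
`A`, `B`, `C`, classify the clauses into the six types `T_a, T_b, T_c, T_ab, T_bc, T_ac`
(by which parts contain their variables), and fix target counts `sa, …, sac`.  There is a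
full assignment satisfying exactly `s_D` clauses of type `T_D` for each of the six types iff
the tripartite graph — whose parts are the assignments to `A` (resp. `B`, `C`) satisfying
exactly `sa` (resp. `sb`, `sc`) clauses of type `T_a` (resp. `T_b`, `T_c`), with edges between
partial assignments whose union satisfies exactly the target number of clauses of the
corresponding cross type — contains a triangle with one vertex in each part. -/
theorem max2sat_triangle_iff {V : Type*} [Fintype V] [DecidableEq V]
    (F : Finset (Finset (V × Bool))) (h2 : ∀ Cl ∈ F, Cl.card ≤ 2)
    (A B C : Finset V)
    (hAB : Disjoint A B) (hAC : Disjoint A C) (hBC : Disjoint B C)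
    (hcover : A ∪ B ∪ C = Finset.univ)
    (sa sb sc sab sbc sac : ℕ) :
    (∃ τ : V → Bool,
        (F.filter fun Cl => varsOf Cl ⊆ A ∧ ∃ l ∈ Cl, τ l.1 = l.2).card = sa ∧
        (F.filter fun Cl => varsOf Cl ⊆ B ∧ ∃ l ∈ Cl, τ l.1 = l.2).card = sb ∧
        (F.filter fun Cl => varsOf Cl ⊆ C ∧ ∃ l ∈ Cl, τ l.1 = l.2).card = sc ∧
        (F.filter fun Cl => ((∃ v ∈ varsOf Cl, v ∈ A) ∧ (∃ v ∈ varsOf Cl, v ∈ B)) ∧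
            ∃ l ∈ Cl, τ l.1 = l.2).card = sab ∧
        (F.filter fun Cl => ((∃ v ∈ varsOf Cl, v ∈ B) ∧ (∃ v ∈ varsOf Cl, v ∈ C)) ∧
            ∃ l ∈ Cl, τ l.1 = l.2).card = sbc ∧
        (F.filter fun Cl => ((∃ v ∈ varsOf Cl, v ∈ A) ∧ (∃ v ∈ varsOf Cl, v ∈ C)) ∧
            ∃ l ∈ Cl, τ l.1 = l.2).card = sac) ↔
    (∃ σA σB σC : V → Bool,
        (F.filter fun Cl => varsOf Cl ⊆ A ∧ SatOn A σA Cl).card = sa ∧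
        (F.filter fun Cl => varsOf Cl ⊆ B ∧ SatOn B σB Cl).card = sb ∧
        (F.filter fun Cl => varsOf Cl ⊆ C ∧ SatOn C σC Cl).card = sc ∧
        (F.filter fun Cl => ((∃ v ∈ varsOf Cl, v ∈ A) ∧ (∃ v ∈ varsOf Cl, v ∈ B)) ∧
            (SatOn A σA Cl ∨ SatOn B σB Cl)).card = sab ∧
        (F.filter fun Cl => ((∃ v ∈ varsOf Cl, v ∈ B) ∧ (∃ v ∈ varsOf Cl, v ∈ C)) ∧
            (SatOn B σB Cl ∨ SatOn C σC Cl)).card = sbc ∧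
        (F.filter fun Cl => ((∃ v ∈ varsOf Cl, v ∈ A) ∧ (∃ v ∈ varsOf Cl, v ∈ C)) ∧
            (SatOn A σA Cl ∨ SatOn C σC Cl)).card = sac) := by
  constructor
  · rintro ⟨τ, h1, h2', h3, h4, h5, h6⟩
    refine ⟨τ, τ, τ, ?_, ?_, ?_, ?_, ?_, ?_⟩
    · rw [← h1]
      refine card_filter_congr _ _ fun Cl hCl => ?_
      exact and_congr_right fun hsub => (pure_iff hsub fun v _ => rfl).symm
    · rw [← h2']
      refine card_filter_congr _ _ fun Cl hCl => ?_
      exact and_congr_right fun hsub => (pure_iff hsub fun v _ => rfl).symm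
    · rw [← h3]
      refine card_filter_congr _ _ fun Cl hCl => ?_
      exact and_congr_right fun hsub => (pure_iff hsub fun v _ => rfl).symm
    · rw [← h4]
      refine card_filter_congr _ _ fun Cl hCl => ?_
      exact and_congr_right fun hx =>
        (cross_iff hAB (h2 Cl hCl) hx.1 hx.2 (fun v _ => rfl) (fun v _ => rfl)).symm
    · rw [← h5]
      refine card_filter_congr _ _ fun Cl hCl => ?_
      exact and_congr_right fun hx =>
        (cross_iff hBC (h2 Cl hCl) hx.1 hx.2 (fun v _ => rfl) (fun v _ => rfl)).symm
    · rw [← h6]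
      refine card_filter_congr _ _ fun Cl hCl => ?_
      exact and_congr_right fun hx =>
        (cross_iff hAC (h2 Cl hCl) hx.1 hx.2 (fun v _ => rfl) (fun v _ => rfl)).symm
  · rintro ⟨σA, σB, σC, h1, h2', h3, h4, h5, h6⟩
    set τ : V → Bool := fun v => if v ∈ A then σA v else if v ∈ B then σB v else σC v with hτ
    have tA : ∀ v ∈ A, τ v = σA v := fun v hv => by simp [hτ, hv]
    have tB : ∀ v ∈ B, τ v = σB v := fun v hv => by
      simp [hτ, Finset.disjoint_right.mp hAB hv, hv]
    have tC : ∀ v ∈ C, τ v = σC v := fun v hv => by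
      simp [hτ, Finset.disjoint_right.mp hAC hv, Finset.disjoint_right.mp hBC hv]
    refine ⟨τ, ?_, ?_, ?_, ?_, ?_, ?_⟩
    · rw [← h1]
      refine card_filter_congr _ _ fun Cl hCl => ?_
      exact and_congr_right fun hsub => pure_iff hsub tA
    · rw [← h2']
      refine card_filter_congr _ _ fun Cl hCl => ?_
      exact and_congr_right fun hsub => pure_iff hsub tB
    · rw [← h3]
      refine card_filter_congr _ _ fun Cl hCl => ?_
      exact and_congr_right fun hsub => pure_iff hsub tC
    · rw [← h4]
      refine card_filter_congr _ _ fun Cl hCl => ?_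
      exact and_congr_right fun hx => cross_iff hAB (h2 Cl hCl) hx.1 hx.2 tA tB
    · rw [← h5]
      refine card_filter_congr _ _ fun Cl hCl => ?_
      exact and_congr_right fun hx => cross_iff hBC (h2 Cl hCl) hx.1 hx.2 tB tC
    · rw [← h6]
      refine card_filter_congr _ _ fun Cl hCl => ?_
      exact and_congr_right fun hx => cross_iff hAC (h2 Cl hCl) hx.1 hx.2 tA tC
end

section
/- Let F be a CNF formula over a variable set V of size n with m clauses, let k ≥ 2 divide n, and partition V into k blocks V_1, …, V_k of size n/k each. Define a graph G as follows: for each block V_ℓ, take one vertex for each of the 2^(n/k) assignments to V_ℓ plus one dummy vertex, and make these 2^(n/k) + 1 vertices a clique; additionally, for each clause C of F take one clause vertex, adjacent exactly to those assignment vertices whose partial assignment satisfies C (i.e., makes true some literal of C whose variable lies in the corresponding block); dummy vertices are adjacent only to the vertices of their own clique. Then G has a dominating set of size at most k if and only if F is satisfiable. -/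
open Classical

/-- The vertex type of the reduction graph: for each block `ℓ : Fin k`, one vertex for each
assignment to the variables of `B ℓ` (the left summand) plus one dummy vertex (the middle
summand `Fin k`), and one vertex for each clause of `F` (the right summand). -/
abbrev DSVert {V : Type*} {k : ℕ} (B : Fin k → Finset V)
    (F : Finset (Finset (V × Bool))) : Type _ :=
  ((ℓ : Fin k) × ({v : V // v ∈ B ℓ} → Bool)) ⊕ Fin k ⊕ {C // C ∈ F}

/-- One-sided adjacency: assignment vertices of the same block are adjacent (clique), the
dummy vertex of a block is adjacent to the assignment vertices of its block, and a clause
vertex is adjacent exactly to the assignment vertices whose partial assignment satisfies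
the clause. -/
def DSAdjCore {V : Type*} {k : ℕ} (B : Fin k → Finset V)
    (F : Finset (Finset (V × Bool))) : DSVert B F → DSVert B F → Prop
  | Sum.inl u, Sum.inl u' => u.1 = u'.1
  | Sum.inl u, Sum.inr (Sum.inl ℓ') => u.1 = ℓ'
  | Sum.inl u, Sum.inr (Sum.inr C) =>
      ∃ l ∈ C.1, ∃ h : l.1 ∈ B u.1, u.2 ⟨l.1, h⟩ = l.2
  | _, _ => False

/-- The (symmetric, loopless) adjacency relation of the reduction graph. -/
def DSAdj {V : Type*} {k : ℕ} (B : Fin k → Finset V)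
    (F : Finset (Finset (V × Bool))) (u v : DSVert B F) : Prop :=
  u ≠ v ∧ (DSAdjCore B F u v ∨ DSAdjCore B F v u)

/-- P\u{a}tras\c{c}u–Williams reduction from CNF-SAT to `k`-Dominating Set: for a CNF formula
`F` over a variable set `V` of size `n`, with `k ≥ 2` dividing `n` and `V` partitioned into
`k` blocks of size `n / k`, the reduction graph has a dominating set of size at most `k`
iff `F` is satisfiable. -/
theorem dominatingSet_iff_satisfiable {V : Type*} [Fintype V] [DecidableEq V]
    {k : ℕ} (hk : 2 ≤ k) (hdvd : k ∣ Fintype.card V)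
    (B : Fin k → Finset V)
    (hBdisj : ∀ ℓ ℓ' : Fin k, ℓ ≠ ℓ' → Disjoint (B ℓ) (B ℓ'))
    (hBcover : Finset.univ.biUnion B = (Finset.univ : Finset V))
    (hBcard : ∀ ℓ : Fin k, (B ℓ).card = Fintype.card V / k)
    (F : Finset (Finset (V × Bool))) :
    (∃ S : Finset (DSVert B F), S.card ≤ k ∧
        ∀ v : DSVert B F, v ∈ S ∨ ∃ u ∈ S, DSAdj B F u v) ↔
      ∃ τ : V → Bool, ∀ C ∈ F, ∃ l ∈ C, τ l.1 = l.2 := by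
  classical
  constructor
  · rintro ⟨S, hScard, hSdom⟩
    -- each variable lies in some block
    have hblk : ∀ v : V, ∃ ℓ, v ∈ B ℓ := by
      intro v
      have hv : v ∈ Finset.univ.biUnion B := by rw [hBcover]; exact Finset.mem_univ v
      simpa using Finset.mem_biUnion.mp hv
    set blk : V → Fin k := fun v => (hblk v).choose with hblkdef
    have hblkmem : ∀ v, v ∈ B (blk v) := fun v => (hblk v).choose_spec
    have hblkuniq : ∀ v (ℓ : Fin k), v ∈ B ℓ → blk v = ℓ := by
      intro v ℓ hv
      by_contra hne
      exact Finset.disjoint_left.mp (hBdisj _ _ hne) (hblkmem v) hv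
    -- a vertex dominating the dummy of block ℓ must be the dummy or an assignment vertex
    have hdum : ∀ ℓ : Fin k, ¬ (∃ σ, (Sum.inl ⟨ℓ, σ⟩ : DSVert B F) ∈ S) →
        (Sum.inr (Sum.inl ℓ) : DSVert B F) ∈ S := by
      intro ℓ hno
      rcases hSdom (Sum.inr (Sum.inl ℓ)) with h | ⟨u, huS, _, hadj⟩
      · exact h
      · exfalso
        rcases hadj with h | h
        · rcases u with ⟨ℓ', σ⟩ | (ℓ'' | c)
          · have hℓ : ℓ' = ℓ := h
            subst hℓ
            exact hno ⟨σ, huS⟩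
          · exact h
          · exact h
        · exact h
    have hfex : ∀ ℓ : Fin k, ∃ u : DSVert B F, u ∈ S ∧
        (u = Sum.inr (Sum.inl ℓ) ∨ ∃ σ, u = Sum.inl ⟨ℓ, σ⟩) := by
      intro ℓ
      by_cases h : ∃ σ, (Sum.inl ⟨ℓ, σ⟩ : DSVert B F) ∈ S
      · obtain ⟨σ, hσ⟩ := h; exact ⟨_, hσ, Or.inr ⟨σ, rfl⟩⟩
      · exact ⟨_, hdum ℓ h, Or.inl rfl⟩
    choose f hfS hfalt using hfex
    -- a retraction giving injectivity of f
    have hk0 : 0 < k := by omega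
    let g : DSVert B F → Fin k := fun u =>
      match u with
      | Sum.inl p => p.1
      | Sum.inr (Sum.inl ℓ) => ℓ
      | Sum.inr (Sum.inr _) => ⟨0, hk0⟩
    have hg : ∀ ℓ, g (f ℓ) = ℓ := by
      intro ℓ
      rcases hfalt ℓ with h | ⟨σ, h⟩ <;> rw [h]
    have hfinj : Function.Injective f := by
      intro ℓ ℓ' h
      rw [← hg ℓ, ← hg ℓ', h]
    have hSeq : S = Finset.univ.image f := by
      refine (Finset.eq_of_subset_of_card_le ?_ ?_).symm
      · intro u hu
        obtain ⟨ℓ, -, rfl⟩ := Finset.mem_image.mp hu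
        exact hfS ℓ
      · rw [Finset.card_image_of_injective _ hfinj, Finset.card_univ, Fintype.card_fin]
        exact hScard
    -- uniqueness: at most one assignment vertex of a given block lies in S
    have huniq : ∀ (ℓ : Fin k) σ, (Sum.inl ⟨ℓ, σ⟩ : DSVert B F) ∈ S →
        f ℓ = Sum.inl ⟨ℓ, σ⟩ := by
      intro ℓ σ hmem
      rw [hSeq] at hmem
      obtain ⟨ℓ', -, h⟩ := Finset.mem_image.mp hmem
      have : ℓ' = ℓ := by
        have h2 := congrArg g h
        rwa [hg ℓ'] at h2
      subst this
      exact h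
    -- the assignment
    refine ⟨fun v =>
      if h : ∃ σ, (Sum.inl ⟨blk v, σ⟩ : DSVert B F) ∈ S then
        h.choose ⟨v, hblkmem v⟩ else false, ?_⟩
    intro C hC
    -- the clause vertex is not in S
    have hCnot : (Sum.inr (Sum.inr ⟨C, hC⟩) : DSVert B F) ∉ S := by
      rw [hSeq]
      intro hmem
      obtain ⟨ℓ, -, h⟩ := Finset.mem_image.mp hmem
      rcases hfalt ℓ with h2 | ⟨σ, h2⟩ <;> rw [h2] at h <;> simp at h
    rcases hSdom (Sum.inr (Sum.inr ⟨C, hC⟩)) with h | ⟨u, huS, _, hadj⟩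
    · exact absurd h hCnot
    · have hcore : DSAdjCore B F u (Sum.inr (Sum.inr ⟨C, hC⟩)) := by
        rcases hadj with h | h
        · exact h
        · exact absurd h (by exact fun h => h)
      match u, hcore with
      | Sum.inl ⟨ℓ, σ⟩, hcore =>
        obtain ⟨l, hl, hlB, hσl⟩ := hcore
        refine ⟨l, hl, ?_⟩
        have hbl : blk l.1 = ℓ := hblkuniq l.1 ℓ hlB
        subst hbl
        have hex : ∃ σ', (Sum.inl ⟨blk l.1, σ'⟩ : DSVert B F) ∈ S := ⟨σ, huS⟩
        dsimp only
        rw [dif_pos hex]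
        have h1 := huniq _ _ hex.choose_spec
        have h2 := huniq _ _ huS
        rw [h1] at h2
        have h3 : hex.choose = σ := by
          have := Sum.inl.inj h2
          exact eq_of_heq (Sigma.mk.inj_iff.mp this).2
        rw [h3]
        exact hσl
  · rintro ⟨τ, hτ⟩
    refine ⟨Finset.univ.image (fun ℓ : Fin k =>
      (Sum.inl ⟨ℓ, fun v => τ v.1⟩ : DSVert B F)), ?_, ?_⟩
    · calc (Finset.univ.image _).card ≤ (Finset.univ : Finset (Fin k)).card :=
            Finset.card_image_le
        _ = k := by simp
    · intro v
      match v with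
      | Sum.inl ⟨ℓ, σ⟩ =>
        by_cases h : σ = fun v => τ v.1
        · left; subst h; exact Finset.mem_image_of_mem _ (Finset.mem_univ ℓ)
        · right
          refine ⟨Sum.inl ⟨ℓ, fun v => τ v.1⟩,
            Finset.mem_image_of_mem _ (Finset.mem_univ ℓ), ?_, Or.inl rfl⟩
          intro heq
          have := Sum.inl.inj heq
          exact h (eq_of_heq (Sigma.mk.inj_iff.mp this).2).symm
      | Sum.inr (Sum.inl ℓ) =>
        right
        exact ⟨Sum.inl ⟨ℓ, fun v => τ v.1⟩,
          Finset.mem_image_of_mem _ (Finset.mem_univ ℓ), by simp, Or.inl rfl⟩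
      | Sum.inr (Sum.inr ⟨C, hC⟩) =>
        right
        obtain ⟨l, hl, hτl⟩ := hτ C hC
        have : l.1 ∈ Finset.univ.biUnion B := by rw [hBcover]; exact Finset.mem_univ _
        obtain ⟨ℓ, -, hmem⟩ := Finset.mem_biUnion.mp this
        exact ⟨Sum.inl ⟨ℓ, fun v => τ v.1⟩,
          Finset.mem_image_of_mem _ (Finset.mem_univ ℓ), by simp,
          Or.inl ⟨l, hl, hmem, hτl⟩⟩
end
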